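/- Let B = ⊕_{n≥0} B_n be an ℕ-graded bialgebra over a field k satisfying the twisting conditions, connected (B_0 = k·1) and generated in degree one (B_{n+1} = B_1·B_n as submodules for all n ≥ 0). Let {α_i : B → k}_{i∈ℤ} and {β_i : B → k}_{i∈ℤ} be families of linear functionals such that: α_i(1) = β_i(1) = 1 for all i; α_0 and β_0 agree with the counit ε on B_1; Σ α_i(x_1)β_i(x_2) = ε(x) = Σ β_i(x_1)α_i(x_2) for all x ∈ B_1 and all i; and for all i ∈ ℤ, x ∈ B_1, b ∈ B: α_i(x·b) = α_i(x)·(α_{i+1} * β_1)(b) and β_i(x·b) = β_i(x)·(α_1 * β_{i+1})(b). Then for every i ∈ ℤ, β_i is the convolution inverse of α_i (α_i * β_i = β_i * α_i = ε), and {α_i}_{i∈ℤ} is a system of twisting functionals on B. -/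

import Mathlib

open TensorProduct

/-- Convolution product of linear functionals on a coalgebra. -/
noncomputable def conv {k B : Type*} [CommSemiring k] [AddCommMonoid B] [Module k B]
    [Coalgebra k B] (f g : B →ₗ[k] k) : B →ₗ[k] k :=
  LinearMap.mul' k k ∘ₗ TensorProduct.map f g ∘ₗ Coalgebra.comul

/-- A system of twisting functionals on a ℤ-graded bialgebra `B`:
convolution-invertible linear functionals `α i` with `α i 1 = 1`, `α 0 = ε`, and
`Σ α_i(a b_1) α_j(b_2) = α_i(a) α_{i+j}(b)` for homogeneous `a` of degree `j`. -/
def IsTwistingFunctionalSystem {k B : Type*} [CommSemiring k] [Semiring B] [Bialgebra k B]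
    (𝒜 : ℤ → Submodule k B) (α : ℤ → (B →ₗ[k] k)) : Prop :=
  (∀ i : ℤ, ∃ αinv : B →ₗ[k] k, conv (α i) αinv = Coalgebra.counit ∧
    conv αinv (α i) = Coalgebra.counit) ∧
  (∀ i : ℤ, α i 1 = 1) ∧
  (α 0 = Coalgebra.counit) ∧
  (∀ (i j : ℤ), ∀ a ∈ 𝒜 j, ∀ b : B,
    conv ((α i) ∘ₗ LinearMap.mulLeft k a) (α j) b = α i a * α (i + j) b)

section Aux
variable {k B : Type*} [CommSemiring k] [AddCommMonoid B] [Module k B] [Coalgebra k B]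

lemma conv_apply (f g : B →ₗ[k] k) (b : B) :
    conv f g b = LinearMap.mul' k k (TensorProduct.map f g (Coalgebra.comul b)) := rfl

lemma conv_counit_right (f : B →ₗ[k] k) : conv f Coalgebra.counit = f := by
  have h : (TensorProduct.map f (Coalgebra.counit (R := k)) : B ⊗[k] B →ₗ[k] k ⊗[k] k)
      = LinearMap.rTensor k f ∘ₗ LinearMap.lTensor B (Coalgebra.counit) := by
    apply TensorProduct.ext'
    intro x y
    simp
  unfold conv
  rw [h]
  ext b
  have := congrArg (LinearMap.rTensor k f)
    (LinearMap.congr_fun (Coalgebra.lTensor_counit_comp_comul (R := k) (A := B)) b)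
  simp only [LinearMap.comp_apply] at this ⊢
  rw [this]
  simp

lemma conv_counit_left (f : B →ₗ[k] k) : conv Coalgebra.counit f = f := by
  have h : (TensorProduct.map (Coalgebra.counit (R := k)) f : B ⊗[k] B →ₗ[k] k ⊗[k] k)
      = LinearMap.lTensor k f ∘ₗ LinearMap.rTensor B (Coalgebra.counit) := by
    apply TensorProduct.ext'
    intro x y
    simp
  unfold conv
  rw [h]
  ext b
  have := congrArg (LinearMap.lTensor k f)
    (LinearMap.congr_fun (Coalgebra.rTensor_counit_comp_comul (R := k) (A := B)) b)
  simp only [LinearMap.comp_apply] at this ⊢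
  rw [this]
  simp

lemma conv_assoc (f g h : B →ₗ[k] k) : conv (conv f g) h = conv f (conv g h) := by
  ext b
  have hψ : (TensorProduct.map f (conv g h) : B ⊗[k] B →ₗ[k] k ⊗[k] k)
      = (TensorProduct.map f (LinearMap.mul' k k ∘ₗ TensorProduct.map g h)) ∘ₗ
        LinearMap.lTensor B (Coalgebra.comul (R := k)) := by
    apply TensorProduct.ext'; intro x y; rfl
  have hχ : (TensorProduct.map (conv f g) h : B ⊗[k] B →ₗ[k] k ⊗[k] k)
      = (TensorProduct.map (LinearMap.mul' k k ∘ₗ TensorProduct.map f g) h) ∘ₗ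
        LinearMap.rTensor B (Coalgebra.comul (R := k)) := by
    apply TensorProduct.ext'; intro x y; rfl
  have key : (LinearMap.mul' k k ∘ₗ
        TensorProduct.map f (LinearMap.mul' k k ∘ₗ TensorProduct.map g h)) ∘ₗ
        (TensorProduct.assoc k B B B).toLinearMap
      = LinearMap.mul' k k ∘ₗ
        TensorProduct.map (LinearMap.mul' k k ∘ₗ TensorProduct.map f g) h := by
    apply TensorProduct.ext_threefold
    intro x y z
    simp [mul_assoc]
  have hco := Coalgebra.coassoc_apply (R := k) (A := B) b
  calc conv (conv f g) h b
      = LinearMap.mul' k k ((TensorProduct.map (LinearMap.mul' k k ∘ₗ TensorProduct.map f g) h)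
        (LinearMap.rTensor B (Coalgebra.comul (R := k)) (Coalgebra.comul b))) := by
        rw [conv_apply, hχ]; rfl
    _ = (LinearMap.mul' k k ∘ₗ
        TensorProduct.map (LinearMap.mul' k k ∘ₗ TensorProduct.map f g) h)
        ((LinearMap.rTensor B (Coalgebra.comul (R := k))) (Coalgebra.comul b)) := rfl
    _ = (LinearMap.mul' k k ∘ₗ
        TensorProduct.map f (LinearMap.mul' k k ∘ₗ TensorProduct.map g h))
        ((TensorProduct.assoc k B B B) (LinearMap.rTensor B (Coalgebra.comul (R := k))
          (Coalgebra.comul b))) := by rw [← key]; rfl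
    _ = conv f (conv g h) b := by
        rw [hco, conv_apply, hψ]; rfl

section Bialg
variable {k B : Type*} [CommSemiring k] [Semiring B] [Bialgebra k B]

lemma conv_one (f g : B →ₗ[k] k) : conv f g 1 = f 1 * g 1 := by
  rw [conv_apply, Bialgebra.comul_one, Algebra.TensorProduct.one_def]
  simp

lemma collapse_global (f p q g : B →ₗ[k] k) (h : conv p q = Coalgebra.counit) :
    conv (conv f p) (conv q g) = conv f g := by
  rw [conv_assoc, ← conv_assoc p q g, h, conv_counit_left]

lemma conv_mulLeft (f g F : B →ₗ[k] k) (a : B) (h1 : ∀ c, f (a * c) = f a * F c) (b : B) :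
    conv (f ∘ₗ LinearMap.mulLeft k a) g b = f a * conv F g b := by
  have key : LinearMap.mul' k k ∘ₗ TensorProduct.map (f ∘ₗ LinearMap.mulLeft k a) g
      = f a • (LinearMap.mul' k k ∘ₗ TensorProduct.map F g) := by
    apply TensorProduct.ext'
    intro x y
    simp [h1 x, mul_assoc]
  calc conv (f ∘ₗ LinearMap.mulLeft k a) g b
      = (LinearMap.mul' k k ∘ₗ TensorProduct.map (f ∘ₗ LinearMap.mulLeft k a) g)
        (Coalgebra.comul b) := rfl
    _ = (f a • (LinearMap.mul' k k ∘ₗ TensorProduct.map F g)) (Coalgebra.comul b) := by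
        rw [key]
    _ = f a * conv F g b := rfl

lemma master (N : Submodule k B) (f g F G : B →ₗ[k] k)
    (h1 : ∀ a ∈ N, ∀ c : B, f (a * c) = f a * F c)
    (h2 : ∀ a ∈ N, ∀ c : B, g (a * c) = g a * G c)
    (a : B) (ha : Coalgebra.comul (R := k) a ∈ LinearMap.range (TensorProduct.mapIncl N N))
    (c : B) :
    conv f g (a * c) = conv f g a * conv F G c := by
  obtain ⟨t, ht⟩ := ha
  have key : ∀ t : N ⊗[k] N, ∀ u : B ⊗[k] B,
      LinearMap.mul' k k (TensorProduct.map f g (TensorProduct.mapIncl N N t * u))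
      = LinearMap.mul' k k (TensorProduct.map f g (TensorProduct.mapIncl N N t)) *
        LinearMap.mul' k k (TensorProduct.map F G u) := by
    intro t
    induction t using TensorProduct.induction_on with
    | zero => intro u; simp
    | tmul a₁ a₂ =>
      intro u
      induction u using TensorProduct.induction_on with
      | zero => simp
      | tmul b₁ b₂ =>
        simp only [TensorProduct.mapIncl, TensorProduct.map_tmul, Submodule.coe_subtype,
          Algebra.TensorProduct.tmul_mul_tmul, LinearMap.mul'_apply]
        rw [h1 _ a₁.2, h2 _ a₂.2]
        ring
      | add u v hu hv =>
        rw [mul_add, map_add, map_add, map_add, map_add, hu, hv, mul_add]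
    | add s t hs ht =>
      intro u
      rw [map_add, add_mul, map_add, map_add, map_add, map_add, add_mul, hs, ht]
  rw [conv_apply, Bialgebra.comul_mul, ← ht, key, ht]
  rfl

lemma collapse_sub (N : Submodule k B)
    (hN : ∀ b ∈ N, Coalgebra.comul (R := k) b ∈ LinearMap.range (TensorProduct.mapIncl N N))
    (f p q g : B →ₗ[k] k) (h : ∀ c ∈ N, conv p q c = Coalgebra.counit (R := k) c) :
    ∀ b ∈ N, conv (conv f p) (conv q g) b = conv f g b := by
  have hA : ∀ d ∈ N, conv (conv p q) g d = g d := by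
    intro d hd
    obtain ⟨t, ht⟩ := hN d hd
    have key : ∀ t : N ⊗[k] N,
        TensorProduct.map (conv p q) g (TensorProduct.mapIncl N N t)
        = TensorProduct.map (Coalgebra.counit (R := k)) g (TensorProduct.mapIncl N N t) := by
      intro t
      induction t using TensorProduct.induction_on with
      | zero => simp
      | tmul e₁ e₂ =>
        simp only [TensorProduct.mapIncl, TensorProduct.map_tmul, Submodule.coe_subtype]
        rw [h _ e₁.2]
      | add s t hs ht => rw [map_add, map_add, map_add, hs, ht]
    have : conv (conv p q) g d = conv (Coalgebra.counit (R := k)) g d := by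
      rw [conv_apply, conv_apply, ← ht, key]
    rw [this, conv_counit_left]
  intro b hb
  obtain ⟨t, ht⟩ := hN b hb
  have key : ∀ t : N ⊗[k] N,
      TensorProduct.map f (conv (conv p q) g) (TensorProduct.mapIncl N N t)
      = TensorProduct.map f g (TensorProduct.mapIncl N N t) := by
    intro t
    induction t using TensorProduct.induction_on with
    | zero => simp
    | tmul e₁ e₂ =>
      simp only [TensorProduct.mapIncl, TensorProduct.map_tmul, Submodule.coe_subtype]
      rw [hA _ e₂.2]
    | add s t hs ht => rw [map_add, map_add, map_add, hs, ht]
  rw [conv_assoc, ← conv_assoc p q g, conv_apply, ← ht, key, ht]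
  rfl

end Bialg
end Aux



/-- For a connected ℕ-graded bialgebra `B` generated in degree one and
satisfying the twisting conditions (viewed as ℤ-graded with trivial negative part), families
`α i`, `β i` of functionals with `α i 1 = β i 1 = 1`, agreeing with `ε` in degree one for
`i = 0`, convolution inverse to each other on degree one, and satisfying the inductive rules
`α_i(x b) = α_i(x) (α_{i+1} * β_1)(b)` and `β_i(x b) = β_i(x) (α_1 * β_{i+1})(b)` for `x` of
degree one, yield: each `β i` is the convolution inverse of `α i`, and `α` is a system of
twisting functionals on `B`. -/
theorem statement6 {k B : Type*} [Field k] [Ring B] [Bialgebra k B]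
    (𝒜 : ℤ → Submodule k B) [GradedAlgebra 𝒜]
    (hT2 : ∀ n : ℤ, ∀ b ∈ 𝒜 n,
      Coalgebra.comul (R := k) b ∈ LinearMap.range (TensorProduct.mapIncl (𝒜 n) (𝒜 n)))
    (hneg : ∀ n : ℤ, n < 0 → 𝒜 n = ⊥)
    (hconn : 𝒜 0 = Submodule.span k {(1 : B)})
    (hgen : ∀ n : ℤ, 0 ≤ n → 𝒜 (n + 1) = 𝒜 1 * 𝒜 n)
    (α β : ℤ → (B →ₗ[k] k))
    (hone : ∀ i : ℤ, α i 1 = 1 ∧ β i 1 = 1)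
    (hzero : ∀ x ∈ 𝒜 1, α 0 x = Coalgebra.counit (R := k) x ∧
      β 0 x = Coalgebra.counit (R := k) x)
    (hinv1 : ∀ i : ℤ, ∀ x ∈ 𝒜 1, conv (α i) (β i) x = Coalgebra.counit (R := k) x ∧
      conv (β i) (α i) x = Coalgebra.counit (R := k) x)
    (hrec : ∀ i : ℤ, ∀ x ∈ 𝒜 1, ∀ b : B,
      α i (x * b) = α i x * conv (α (i + 1)) (β 1) b ∧
      β i (x * b) = β i x * conv (α 1) (β (i + 1)) b) :
    (∀ i : ℤ, conv (α i) (β i) = Coalgebra.counit ∧ conv (β i) (α i) = Coalgebra.counit) ∧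
    IsTwistingFunctionalSystem 𝒜 α := by
  have hext : ∀ f g : B →ₗ[k] k, (∀ n : ℤ, ∀ b ∈ 𝒜 n, f b = g b) → f = g := by
    intro f g h
    ext b
    refine DirectSum.Decomposition.inductionOn 𝒜 (motive := fun b => f b = g b) (by simp) (fun {i} m => h i m m.2)
      (fun m m' hm hm' => by show f (m + m') = g (m + m'); rw [map_add, map_add, hm, hm']) b
  have hzmem : ∀ b ∈ 𝒜 (0 : ℤ), ∃ l : k, b = l • (1 : B) := by
    intro b hb
    rw [hconn, Submodule.mem_span_singleton] at hb
    obtain ⟨l, hl⟩ := hb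
    exact ⟨l, hl.symm⟩
  -- Claim 1, homogeneous
  have claim1h : ∀ n : ℕ, ∀ i : ℤ, ∀ b ∈ 𝒜 (n : ℤ),
      conv (α i) (β i) b = Coalgebra.counit (R := k) b ∧
      conv (β i) (α i) b = Coalgebra.counit (R := k) b := by
    intro n
    induction n with
    | zero =>
      intro i b hb
      obtain ⟨l, rfl⟩ := hzmem b (by exact_mod_cast hb)
      constructor <;>
        simp [map_smul, conv_one, (hone i).1, (hone i).2]
    | succ m ih =>
      intro i b hb
      have hsplit : b ∈ 𝒜 1 * 𝒜 (m : ℤ) := by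
        rw [← hgen (m : ℤ) (by positivity)]
        exact_mod_cast hb
      refine Submodule.mul_induction_on hsplit ?_ ?_
      · intro x hx c hc
        constructor
        · rw [master (𝒜 1) (α i) (β i) (conv (α (i+1)) (β 1)) (conv (α 1) (β (i+1)))
            (fun a ha c => (hrec i a ha c).1) (fun a ha c => (hrec i a ha c).2)
            x (hT2 1 x hx) c,
            collapse_sub (𝒜 (m:ℤ)) (hT2 (m:ℤ)) (α (i+1)) (β 1) (α 1) (β (i+1))
              (fun d hd => (ih 1 d hd).2) c hc,
            (ih (i+1) c hc).1, (hinv1 i x hx).1, Bialgebra.counit_mul]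
        · rw [master (𝒜 1) (β i) (α i) (conv (α 1) (β (i+1))) (conv (α (i+1)) (β 1))
            (fun a ha c => (hrec i a ha c).2) (fun a ha c => (hrec i a ha c).1)
            x (hT2 1 x hx) c,
            collapse_sub (𝒜 (m:ℤ)) (hT2 (m:ℤ)) (α 1) (β (i+1)) (α (i+1)) (β 1)
              (fun d hd => (ih (i+1) d hd).2) c hc,
            (ih 1 c hc).1, (hinv1 i x hx).2, Bialgebra.counit_mul]
      · intro u v hu hv
        constructor <;> simp only [map_add, hu.1, hu.2, hv.1, hv.2]
  -- Claim 1, global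
  have claim1 : ∀ i : ℤ, conv (α i) (β i) = Coalgebra.counit ∧
      conv (β i) (α i) = Coalgebra.counit := by
    intro i
    constructor <;>
    · apply hext
      intro n b hb
      rcases lt_or_ge n 0 with hn | hn
      · rw [hneg n hn, Submodule.mem_bot] at hb
        simp [hb]
      · obtain ⟨m, rfl⟩ := Int.eq_ofNat_of_zero_le hn
        first
        | exact (claim1h m i b hb).1
        | exact (claim1h m i b hb).2
  -- Claim 2 : α 0 = β 0 = ε
  have claim2 : α 0 = Coalgebra.counit ∧ β 0 = Coalgebra.counit := by
    have key : ∀ n : ℤ, ∀ b ∈ 𝒜 n, α 0 b = Coalgebra.counit (R := k) b ∧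
        β 0 b = Coalgebra.counit (R := k) b := by
      intro n b hb
      rcases lt_or_ge n 0 with hn | hn
      · rw [hneg n hn, Submodule.mem_bot] at hb
        simp [hb]
      rcases eq_or_lt_of_le hn with hn0 | hn1
      · obtain ⟨l, rfl⟩ := hzmem b (by rw [hn0]; exact hb)
        constructor <;> simp [(hone 0).1, (hone 0).2]
      rcases eq_or_lt_of_le (by omega : (1:ℤ) ≤ n) with hn1' | hn2
      · exact hzero b (by rw [hn1']; exact hb)
      · have hsplit : b ∈ 𝒜 1 * 𝒜 (n - 1) := by
          rw [← hgen (n-1) (by omega)]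
          simpa using hb
        refine Submodule.mul_induction_on hsplit ?_ ?_
        · intro x hx c _
          have h1 := (hrec 0 x hx c).1
          have h2 := (hrec 0 x hx c).2
          rw [zero_add] at h1 h2
          rw [h1, h2, (claim1 1).1, (hzero x hx).1, (hzero x hx).2, Bialgebra.counit_mul]
          exact ⟨rfl, rfl⟩
        · intro u v hu hv
          constructor <;> simp only [map_add, hu.1, hu.2, hv.1, hv.2]
    constructor <;>
    · apply hext
      intro n b hb
      first
      | exact (key n b hb).1
      | exact (key n b hb).2
  -- Claim P
  have P : ∀ n : ℕ, ∀ i : ℤ, ∀ a ∈ 𝒜 (n : ℤ), ∀ c : B,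
      α i (a * c) = α i a * conv (α (i + n)) (β n) c ∧
      β i (a * c) = β i a * conv (α n) (β (i + n)) c := by
    intro n
    induction n with
    | zero =>
      intro i a ha c
      obtain ⟨l, rfl⟩ := hzmem a (by exact_mod_cast ha)
      push_cast
      rw [add_zero, claim2.1, claim2.2, conv_counit_right, conv_counit_left]
      constructor <;>
        simp [smul_mul_assoc, (hone i).1, (hone i).2]
    | succ m ih =>
      intro i a ha c
      have hsplit : a ∈ 𝒜 1 * 𝒜 (m : ℤ) := by
        rw [← hgen (m : ℤ) (by positivity)]
        exact_mod_cast ha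
      refine Submodule.mul_induction_on hsplit ?_ ?_
      · intro x hx a' ha'
        constructor
        · rw [mul_assoc, (hrec i x hx (a' * c)).1,
            master (𝒜 (m:ℤ)) (α (i+1)) (β 1) (conv (α (i+1+m)) (β m)) (conv (α m) (β (1+m)))
              (fun a ha c => by exact_mod_cast (ih (i+1) a ha c).1)
              (fun a ha c => by exact_mod_cast (ih 1 a ha c).2)
              a' (hT2 (m:ℤ) a' ha') c,
            collapse_global (α (i+1+m)) (β m) (α m) (β (1+m)) (claim1 (m:ℤ)).2,
            (hrec i x hx a').1]
          push_cast
          ring_nf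
        · rw [mul_assoc, (hrec i x hx (a' * c)).2,
            master (𝒜 (m:ℤ)) (α 1) (β (i+1)) (conv (α (1+m)) (β m)) (conv (α m) (β (i+1+m)))
              (fun a ha c => by exact_mod_cast (ih 1 a ha c).1)
              (fun a ha c => by exact_mod_cast (ih (i+1) a ha c).2)
              a' (hT2 (m:ℤ) a' ha') c,
            collapse_global (α (1+m)) (β m) (α m) (β (i+1+m)) (claim1 (m:ℤ)).2,
            (hrec i x hx a').2]
          push_cast
          ring_nf
      · intro u v hu hv
        constructor <;>
          simp only [add_mul, map_add, hu.1, hu.2, hv.1, hv.2, add_mul]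
  -- Twisting relation
  have T : ∀ (i j : ℤ), ∀ a ∈ 𝒜 j, ∀ b : B,
      conv ((α i) ∘ₗ LinearMap.mulLeft k a) (α j) b = α i a * α (i + j) b := by
    intro i j a ha b
    rcases lt_or_ge j 0 with hj | hj
    · rw [hneg j hj, Submodule.mem_bot] at ha
      subst ha
      rw [conv_mulLeft (α i) (α j) 0 0 (by simp)]
      simp
    · obtain ⟨n, rfl⟩ := Int.eq_ofNat_of_zero_le hj
      rw [conv_mulLeft (α i) (α (n:ℤ)) (conv (α (i+n)) (β n)) a
          (fun c => (P n i a ha c).1),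
        conv_assoc, (claim1 (n:ℤ)).2, conv_counit_right]
  refine ⟨claim1, ?_, fun i => (hone i).1, claim2.1, T⟩
  exact fun i => ⟨β i, (claim1 i).1, (claim1 i).2⟩
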